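/- Let A_1, ..., A_n be events on a probability space with P(A_i) > 0 for each i, and let q_1, ..., q_n be positive reals with ∑_{j=1}^n q_j = 1. Then P(⋃_{j=1}^n A_j) ≥ 1 / (∑_{i=1}^n ∑_{j=1}^n q_i q_j · P(A_i ∩ A_j)/(P(A_i) P(A_j))). -/

import Mathlib

open MeasureTheory

/-- Weighted second moment lower bound for the probability of a union
(Lemma 3.3 of Xue 2017b). -/
theorem stmt5 {Ω : Type*} [MeasurableSpace Ω] (μ : Measure Ω) [IsProbabilityMeasure μ]
    (n : ℕ) (hn : 1 ≤ n) (A : Fin n → Set Ω) (hAmeas : ∀ i, MeasurableSet (A i))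
    (hApos : ∀ i, 0 < (μ (A i)).toReal)
    (q : Fin n → ℝ) (hq : ∀ i, 0 < q i) (hqsum : ∑ i, q i = 1) :
    1 / (∑ i, ∑ j, q i * q j * (μ (A i ∩ A j)).toReal /
        ((μ (A i)).toReal * (μ (A j)).toReal)) ≤ (μ (⋃ j, A j)).toReal := by
  set c : Fin n → ℝ := fun i => q i / (μ (A i)).toReal with hc
  set X : Ω → ℝ := fun ω => ∑ i, (A i).indicator (fun _ => c i) ω with hX
  set U : Set Ω := ⋃ j, A j with hU
  have hUmeas : MeasurableSet U := MeasurableSet.iUnion hAmeas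
  set g : Ω → ℝ := U.indicator (fun _ => (1:ℝ)) with hg
  have hcpos : ∀ i, 0 < c i := fun i => div_pos (hq i) (hApos i)
  set S : ℝ := ∑ i, ∑ j, q i * q j * (μ (A i ∩ A j)).toReal /
      ((μ (A i)).toReal * (μ (A j)).toReal) with hS
  -- integral of X is 1
  have hXint : ∫ ω, X ω ∂μ = 1 := by
    rw [hX, integral_finset_sum _ (fun i _ =>
      (integrable_const (c i)).indicator (hAmeas i))]
    have : ∀ i : Fin n, ∫ ω, (A i).indicator (fun _ => c i) ω ∂μ
        = (μ (A i)).toReal • c i := fun i => integral_indicator_const (c i) (hAmeas i)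
    rw [Finset.sum_congr rfl (fun i _ => this i)]
    rw [← hqsum]
    refine Finset.sum_congr rfl (fun i _ => ?_)
    rw [smul_eq_mul, hc, mul_div_assoc', mul_comm, mul_div_assoc, div_self (hApos i).ne', mul_one]
  -- integral of X^2 is S
  have hX2int : ∫ ω, X ω * X ω ∂μ = S := by
    have hpt : ∀ ω, X ω * X ω =
        ∑ i, ∑ j, (A i ∩ A j).indicator (fun _ => c i * c j) ω := by
      intro ω
      rw [hX, Finset.sum_mul_sum]
      refine Finset.sum_congr rfl (fun i _ => Finset.sum_congr rfl (fun j _ => ?_))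
      by_cases hi : ω ∈ A i <;> by_cases hj : ω ∈ A j <;>
        simp [Set.indicator_apply, hi, hj, Set.mem_inter_iff]
    simp_rw [hpt]
    rw [integral_finset_sum _ (fun i _ => integrable_finset_sum _ (fun j _ =>
      (integrable_const (c i * c j)).indicator ((hAmeas i).inter (hAmeas j))))]
    rw [hS]
    refine Finset.sum_congr rfl (fun i _ => ?_)
    rw [integral_finset_sum _ (fun j _ =>
      (integrable_const (c i * c j)).indicator ((hAmeas i).inter (hAmeas j)))]
    refine Finset.sum_congr rfl (fun j _ => ?_)
    rw [integral_indicator_const _ ((hAmeas i).inter (hAmeas j)), smul_eq_mul, hc]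
    have hi := (hApos i).ne'
    have hj := (hApos j).ne'
    field_simp
    rw [measureReal_def]
    ring
  -- X = X * g pointwise
  have hXg : ∀ ω, X ω = X ω * g ω := by
    intro ω
    by_cases hω : ω ∈ U
    · simp [hg, Set.indicator_of_mem hω]
    · have : X ω = 0 := by
        rw [hX]
        refine Finset.sum_eq_zero (fun i _ => ?_)
        have : ω ∉ A i := fun h => hω (Set.mem_iUnion.2 ⟨i, h⟩)
        simp [Set.indicator_of_notMem this]
      simp [this]
  have hXnn : 0 ≤ᵐ[μ] X := by
    refine Filter.Eventually.of_forall (fun ω => ?_)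
    exact Finset.sum_nonneg (fun i _ => Set.indicator_nonneg (fun _ _ => (hcpos i).le) ω)
  have hgnn : 0 ≤ᵐ[μ] g := by
    refine Filter.Eventually.of_forall (fun ω => ?_)
    exact Set.indicator_nonneg (fun _ _ => zero_le_one) ω
  have hXmem : MemLp X (ENNReal.ofReal 2) μ := by
    have : X = ∑ i, (A i).indicator (fun _ => c i) := by
      ext ω; simp [hX, Finset.sum_apply]
    rw [this]
    exact memLp_finsetSum' _ (fun i _ =>
      memLp_indicator_const _ (hAmeas i) (c i) (Or.inr (measure_ne_top μ _)))
  have hgmem : MemLp g (ENNReal.ofReal 2) μ := by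
    exact memLp_indicator_const _ hUmeas 1 (Or.inr (measure_ne_top μ _))
  have hCS := integral_mul_le_Lp_mul_Lq_of_nonneg (Real.holderConjugate_iff_eq_conjExponent
    (by norm_num) |>.2 (by norm_num)) hXnn hgnn hXmem hgmem
  -- rewrite rpow 2 as mul
  have hrw2 : ∀ x : ℝ, x ^ (2:ℝ) = x * x := by
    intro x
    rw [show (2:ℝ) = ((2:ℕ):ℝ) by norm_num, Real.rpow_natCast, sq]
  have hgsq : ∫ ω, g ω * g ω ∂μ = (μ U).toReal := by
    have : ∀ ω, g ω * g ω = g ω := by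
      intro ω
      by_cases hω : ω ∈ U <;> simp [hg, Set.indicator_apply, hω]
    simp_rw [this, hg]
    rw [integral_indicator_const _ hUmeas, smul_eq_mul, mul_one, measureReal_def]
  have hXgint : ∫ ω, X ω * g ω ∂μ = 1 := by
    rw [← hXint]
    exact integral_congr_ae (Filter.Eventually.of_forall (fun ω => (hXg ω).symm))
  simp_rw [hrw2] at hCS
  rw [hXgint, hX2int, hgsq] at hCS
  -- hCS : 1 ≤ S ^ (1/2) * μ U .toReal ^ (1/2)
  have hSnn : 0 ≤ S := by
    rw [← hX2int]
    refine integral_nonneg (fun ω => mul_self_nonneg _)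
  have hUnn : (0:ℝ) ≤ (μ U).toReal := ENNReal.toReal_nonneg
  have key : 1 ≤ S * (μ U).toReal := by
    have h1 : (1:ℝ) ≤ (S ^ ((1:ℝ)/2) * (μ U).toReal ^ ((1:ℝ)/2)) ^ (2:ℕ) := by
      nlinarith [hCS, Real.rpow_nonneg hSnn ((1:ℝ)/2), Real.rpow_nonneg hUnn ((1:ℝ)/2)]
    calc (1:ℝ) ≤ (S ^ ((1:ℝ)/2) * (μ U).toReal ^ ((1:ℝ)/2)) ^ (2:ℕ) := h1
      _ = S * (μ U).toReal := by
          rw [mul_pow, ← Real.rpow_natCast (S ^ ((1:ℝ)/2)) 2,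
            ← Real.rpow_natCast ((μ U).toReal ^ ((1:ℝ)/2)) 2,
            ← Real.rpow_mul hSnn, ← Real.rpow_mul hUnn]
          norm_num
  have hSpos : 0 < S := by
    rcases lt_or_eq_of_le hSnn with h | h
    · exact h
    · exfalso; rw [← h] at key; simp at key; linarith
  rw [div_le_iff₀ hSpos]
  linarith [key]
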